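/- Let μ be a σ-finite measure on X and let E be a complex Hilbert space. Suppose S : L²(X, μ; E) → L²(X, μ; E) is a norm-preserving, additive, conjugate-homogeneous involution (S² = id) such that for every measurable set A ⊆ X and every f, S(χ_A·f) = χ_{1−A}·(Sf). Then for every f ∈ L²(X, μ; E), the essential support of Sf is the complement-flip of that of f: the sets {x ∈ X : (Sf)(x) ≠ 0} and 1 − {x ∈ X : f(x) ≠ 0} differ by a μ-null set (for any choice of measurable representatives). -/

import Mathlib

/-!
Common setup: `GWX` is the compact abelian group `X = ∏_{k ≥ 1} {0,1}` of 0-1 sequences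
(with componentwise addition mod 2 and the product σ-algebra, which is generated by the
sets `X_k = {x : x_k = 1}`).  The coordinate `i : ℕ` of `x : GWX` represents the paper's
coordinate `x_{i+1}`, so the Lean index `k : ℕ` corresponds to the paper's index `k + 1`
throughout; in particular the paper's sign `(-1)^k` becomes `(-1)^(k+1)` here.
-/

open MeasureTheory Complex Filter
open scoped ENNReal

noncomputable section

abbrev GWX : Type := ℕ → ZMod 2

/-- `δ_k`: the sequence with `1` in the `k`-th place (the paper's `(k+1)`-th place)
and `0` elsewhere. -/
def gwDelta (k : ℕ) : GWX := fun i => if i = k then 1 else 0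

/-- The componentwise complement `x ↦ 1 - x`. -/
def gwFlip (x : GWX) : GWX := fun i => 1 - x i

/-- The sign `(-1)^{x_1 + ⋯ + x_{k-1} + 1}` of the paper, for the paper's index `k + 1`. -/
def gwSign (k : ℕ) (x : GWX) : ℂ := (-1 : ℂ) ^ ((∑ i ∈ Finset.range k, (x i).val) + 1)

open scoped symmDiff

lemma gwFlip_involutive : Function.Involutive gwFlip := by
  intro x; funext i
  show 1 - (1 - x i) = x i
  ring

lemma gwFlip_measurable : Measurable gwFlip := by
  apply measurable_pi_lambda
  intro i
  exact Measurable.comp (measurable_of_countable _) (measurable_pi_apply i)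

lemma gwFlip_image (s : Set GWX) : gwFlip '' s = gwFlip ⁻¹' s := by
  rw [Set.image_eq_preimage_of_inverse gwFlip_involutive.leftInverse
    gwFlip_involutive.rightInverse]

/-- if a norm-preserving, additive, conjugate-homogeneous involution `S` of
`L²(X, μ; E)` intertwines multiplication by `χ_A` with multiplication by `χ_{1-A}` for every
measurable `A`, then for every `f` the (essential) support of `S f` is the complement-flip
`1 - Supp f` of the support of `f`: for any choice of representatives `u` of `f` and `v` of
`S f`, the sets `{v ≠ 0}` and `1 - {u ≠ 0}` differ by a `μ`-null set. -/
theorem conj_involution_support_flip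
    {E : Type*} [NormedAddCommGroup E] [InnerProductSpace ℂ E] [CompleteSpace E]
    (μ : Measure GWX) [SigmaFinite μ]
    (S : Lp E 2 μ → Lp E 2 μ)
    (hnorm : ∀ f, ‖S f‖ = ‖f‖)
    (hadd : ∀ f g, S (f + g) = S f + S g)
    (hconj : ∀ (α : ℂ) (f : Lp E 2 μ), S (α • f) = (starRingEnd ℂ) α • S f)
    (hinv : ∀ f, S (S f) = f)
    (hA : ∀ (A : Set GWX), MeasurableSet A → ∀ (f g : Lp E 2 μ),
      (↑g : GWX → E) =ᵐ[μ] A.indicator ↑f →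
      (↑(S g) : GWX → E) =ᵐ[μ] (gwFlip '' A).indicator ↑(S f)) :
    ∀ (f : Lp E 2 μ) (u v : GWX → E),
      u =ᵐ[μ] (↑f : GWX → E) → v =ᵐ[μ] (↑(S f) : GWX → E) →
      μ ({x : GWX | v x ≠ 0} ∆ (gwFlip '' {x : GWX | u x ≠ 0})) = 0 := by
  classical
  intro f u v hu hv
  rcases subsingleton_or_nontrivial E with hE | hE
  · have h1 : {x : GWX | v x ≠ 0} = ∅ := by
      ext x; simp [Subsingleton.elim (v x) 0]
    have h2 : {x : GWX | u x ≠ 0} = ∅ := by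
      ext x; simp [Subsingleton.elim (u x) 0]
    simp [h1, h2]
  -- S 0 = 0
  have hS0 : S 0 = 0 := by
    have h := hadd 0 0
    rw [add_zero] at h
    exact left_eq_add.mp h
  -- null sets are preserved by flip
  have null_flip : ∀ N : Set GWX, MeasurableSet N → μ N = 0 → μ (gwFlip ⁻¹' N) = 0 := by
    intro N hNm hN0
    set C := gwFlip ⁻¹' N with hC
    have hCm : MeasurableSet C := gwFlip_measurable hNm
    -- every h ∈ Lp vanishes a.e. on C
    have key : ∀ h : Lp E 2 μ, C.indicator (↑h : GWX → E) =ᵐ[μ] 0 := by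
      intro h
      have h0 : (↑(0 : Lp E 2 μ) : GWX → E) =ᵐ[μ] N.indicator ↑(S h) := by
        refine (Lp.coeFn_zero E 2 μ).trans ?_
        have : ∀ᵐ x ∂μ, x ∉ N := by
          rw [ae_iff]; simpa using hN0
        filter_upwards [this] with x hx
        simp [Set.indicator_of_notMem hx]
      have := hA N hNm (S h) 0 h0
      rw [hS0, hinv, gwFlip_image] at this
      exact ((Lp.coeFn_zero E 2 μ).symm.trans this).symm
    obtain ⟨e, he⟩ := exists_ne (0 : E)
    have hfin : ∀ n, μ (C ∩ spanningSets μ n) = 0 := by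
      intro n
      have hMm : MeasurableSet (C ∩ spanningSets μ n) :=
        hCm.inter (measurableSet_spanningSets μ n)
      have hMfin : μ (C ∩ spanningSets μ n) ≠ ∞ :=
        ((measure_mono Set.inter_subset_right).trans_lt (measure_spanningSets_lt_top μ n)).ne
      set h : Lp E 2 μ := indicatorConstLp 2 hMm hMfin e with hh
      have h1 : C.indicator (↑h : GWX → E) =ᵐ[μ]
          (C ∩ spanningSets μ n).indicator (fun _ => e) := by
        filter_upwards [indicatorConstLp_coeFn (p := 2) (hs := hMm) (hμs := hMfin) (c := e)]
          with x hx
        rw [Set.indicator_apply C]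
        by_cases hxC : x ∈ C
        · rw [if_pos hxC]; exact hx
        · rw [if_neg hxC, Set.indicator_of_notMem (fun hc => hxC hc.1)]
      have h2 : (C ∩ spanningSets μ n).indicator (fun _ => e) =ᵐ[μ] (0 : GWX → E) :=
        h1.symm.trans (key h)
      refine measure_mono_null ?_ h2
      intro x hx
      simp only [Set.mem_compl_iff, Set.mem_setOf_eq, Pi.zero_apply]
      rw [Set.indicator_of_mem hx]
      exact he
    have : C ⊆ ⋃ n, C ∩ spanningSets μ n := by
      intro x hx
      have hx2 : x ∈ ⋃ n, spanningSets μ n := by rw [iUnion_spanningSets]; trivial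
      obtain ⟨n, hxs⟩ := Set.mem_iUnion.mp hx2
      exact Set.mem_iUnion.2 ⟨n, hx, hxs⟩
    exact measure_mono_null this (measure_iUnion_null hfin)
  have null_flip' : ∀ N : Set GWX, μ N = 0 → μ (gwFlip ⁻¹' N) = 0 := by
    intro N hN
    obtain ⟨N', hsub, hN'm, hN'0⟩ := exists_measurable_superset_of_null hN
    exact measure_mono_null (Set.preimage_mono hsub) (null_flip N' hN'm hN'0)
  -- main argument with canonical representatives
  set φ : GWX → E := (↑f : GWX → E) with hφdef
  set ψ : GWX → E := (↑(S f) : GWX → E) with hψdef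
  have hφm : StronglyMeasurable φ := Lp.stronglyMeasurable f
  have hψm : StronglyMeasurable ψ := Lp.stronglyMeasurable (S f)
  set A : Set GWX := {x | φ x ≠ 0} with hAdef
  set B : Set GWX := {x | ψ x ≠ 0} with hBdef
  have hAm : MeasurableSet A :=
    (hφm.measurableSet_eq_fun stronglyMeasurable_const).compl
  have hBm : MeasurableSet B :=
    (hψm.measurableSet_eq_fun stronglyMeasurable_const).compl
  have hindA : A.indicator φ = φ := by
    funext x
    by_cases hx : x ∈ A
    · simp [Set.indicator_of_mem hx]
    · have : φ x = 0 := by simpa [hAdef] using hx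
      simp [Set.indicator_of_notMem hx, this]
  have hindB : B.indicator ψ = ψ := by
    funext x
    by_cases hx : x ∈ B
    · simp [Set.indicator_of_mem hx]
    · have : ψ x = 0 := by simpa [hBdef] using hx
      simp [Set.indicator_of_notMem hx, this]
  -- step 1 : B ⊆ flip⁻¹' A a.e.
  have step1 : μ (B \ gwFlip ⁻¹' A) = 0 := by
    have h := hA A hAm f f (by rw [← hφdef, hindA])
    rw [gwFlip_image] at h
    refine measure_mono_null ?_ h
    intro x hx
    simp only [Set.mem_compl_iff, Set.mem_setOf_eq]
    rw [Set.indicator_of_notMem hx.2]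
    exact hx.1
  -- step 2 : A ⊆ flip⁻¹' B a.e.
  have step2 : μ (A \ gwFlip ⁻¹' B) = 0 := by
    have h := hA B hBm (S f) (S f) (by rw [← hψdef, hindB])
    rw [gwFlip_image, hinv] at h
    refine measure_mono_null ?_ h
    intro x hx
    simp only [Set.mem_compl_iff, Set.mem_setOf_eq]
    rw [Set.indicator_of_notMem hx.2]
    exact hx.1
  -- step 3 : flip⁻¹' A \ B null
  have step3 : μ (gwFlip ⁻¹' A \ B) = 0 := by
    have : gwFlip ⁻¹' A \ B = gwFlip ⁻¹' (A \ gwFlip ⁻¹' B) := by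
      ext x
      simp only [Set.mem_diff, Set.mem_preimage, gwFlip_involutive x]
    rw [this]
    exact null_flip' _ step2
  have hmain : μ (B ∆ (gwFlip ⁻¹' A)) = 0 := by
    rw [Set.symmDiff_def]
    exact measure_union_null step1 step3
  -- transfer to u, v
  have hv' : μ ({x | v x ≠ 0} ∆ B) = 0 := by
    refine measure_mono_null ?_ hv
    intro x hx
    simp only [Set.symmDiff_def, Set.mem_union, Set.mem_diff, Set.mem_setOf_eq] at hx
    simp only [Set.mem_compl_iff, Set.mem_setOf_eq]
    rcases hx with hx | hx
    · exact fun h => hx.1 (h.trans (not_not.mp hx.2))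
    · exact fun h => hx.1 (h.symm.trans (not_not.mp hx.2))
  have hu' : μ ((gwFlip ⁻¹' A) ∆ (gwFlip '' {x | u x ≠ 0})) = 0 := by
    rw [gwFlip_image]
    have : (gwFlip ⁻¹' A) ∆ (gwFlip ⁻¹' {x | u x ≠ 0})
        = gwFlip ⁻¹' (A ∆ {x | u x ≠ 0}) := by
      simp [Set.symmDiff_def, Set.preimage_union, Set.preimage_diff]
    rw [this]
    refine null_flip' _ (measure_mono_null ?_ (hu.symm : (φ : GWX → E) =ᵐ[μ] u))
    intro x hx
    simp only [Set.symmDiff_def, Set.mem_union, Set.mem_diff, Set.mem_setOf_eq] at hx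
    simp only [Set.mem_compl_iff, Set.mem_setOf_eq]
    rcases hx with hx | hx
    · exact fun h => hx.1 (h.trans (not_not.mp hx.2))
    · exact fun h => hx.1 (h.symm.trans (not_not.mp hx.2))
  refine measure_mono_null (le_trans (symmDiff_triangle _ B _) ?_)
    (measure_union_null hv' (measure_union_null hmain hu'))
  exact sup_le_sup_left (symmDiff_triangle _ (gwFlip ⁻¹' A) _) _
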